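/- Lemma A.4 (norm of the whitened feature-reward vector). Let 𝒮 be a nonempty finite type, let d ≥ 1, let Φ be a real matrix with rows (φ_i)_{i∈𝒮} in ℝᵈ, and let μ : 𝒮 → ℝ be nonnegative with ∑_{i∈𝒮} μ_i = 1. Assume Σ_cov := Φᵀ·diag(μ)·Φ is positive definite. Let r ∈ ℝ^𝒮 satisfy |r_i| ≤ 1 for all i ∈ 𝒮, and set θ_{φ,r} := Φᵀ·diag(μ)·r. Then: (a) if there exists θ_r ∈ ℝᵈ with Φθ_r = r (reward realizability), then ‖Σ_cov^{−1/2}·θ_{φ,r}‖₂ ≤ 1; (b) in general, ‖Σ_cov^{−1/2}·θ_{φ,r}‖₂ ≤ √d. -/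

import Mathlib

open scoped Matrix.Norms.L2Operator
open Matrix

section OldSqrt
open scoped ComplexOrder

/-- The square root of a positive semidefinite matrix, as defined in the older Mathlib
(`Matrix.PosSemidef.sqrt`), which has since been removed. -/
noncomputable def Matrix.PosSemidef.sqrt {n 𝕜 : Type*} [Fintype n] [RCLike 𝕜] [DecidableEq n]
    {A : Matrix n n 𝕜} (hA : A.PosSemidef) : Matrix n n 𝕜 :=
  hA.1.eigenvectorUnitary.1 * diagonal ((↑) ∘ (√·) ∘ hA.1.eigenvalues) *
    (star hA.1.eigenvectorUnitary : Matrix n n 𝕜)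

end OldSqrt

section OldSqrtLemmas
open scoped ComplexOrder

theorem Matrix.PosSemidef.sqrt_mul_self {n 𝕜 : Type*} [Fintype n] [RCLike 𝕜] [DecidableEq n]
    {A : Matrix n n 𝕜} (hA : A.PosSemidef) : hA.sqrt * hA.sqrt = A := by
  have hU : (star hA.1.eigenvectorUnitary : Matrix n n 𝕜) * hA.1.eigenvectorUnitary.1 = 1 :=
    Unitary.coe_star_mul_self _
  have hD : diagonal (((↑) ∘ (√·) ∘ hA.1.eigenvalues : n → 𝕜)) *
      diagonal ((↑) ∘ (√·) ∘ hA.1.eigenvalues) = diagonal (RCLike.ofReal ∘ hA.1.eigenvalues) := by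
    rw [diagonal_mul_diagonal]
    congr 1
    funext i
    simp only [Function.comp_apply]
    rw [← RCLike.ofReal_mul, Real.mul_self_sqrt (hA.eigenvalues_nonneg i)]
  unfold Matrix.PosSemidef.sqrt
  conv_rhs => rw [hA.1.spectral_theorem, Unitary.conjStarAlgAut_apply]
  calc _ = hA.1.eigenvectorUnitary.1 * diagonal ((↑) ∘ (√·) ∘ hA.1.eigenvalues) *
        ((star hA.1.eigenvectorUnitary : Matrix n n 𝕜) * hA.1.eigenvectorUnitary.1) *
        diagonal ((↑) ∘ (√·) ∘ hA.1.eigenvalues) *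
        (star hA.1.eigenvectorUnitary : Matrix n n 𝕜) := by simp only [Matrix.mul_assoc]
    _ = _ := by rw [hU, Matrix.mul_one, Matrix.mul_assoc _ (diagonal _) (diagonal _), hD]

theorem Matrix.PosSemidef.posSemidef_sqrt {n 𝕜 : Type*} [Fintype n] [RCLike 𝕜] [DecidableEq n]
    {A : Matrix n n 𝕜} (hA : A.PosSemidef) : hA.sqrt.PosSemidef := by
  unfold Matrix.PosSemidef.sqrt
  have h := (posSemidef_diagonal_iff.2 (fun i => by
    simp only [Function.comp_apply]
    exact_mod_cast Real.sqrt_nonneg (hA.1.eigenvalues i)) :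
      (diagonal (((↑) ∘ (√·) ∘ hA.1.eigenvalues : n → 𝕜))).PosSemidef).mul_mul_conjTranspose_same
      hA.1.eigenvectorUnitary.1
  simpa [star_eq_conjTranspose] using h

end OldSqrtLemmas

/-- Lemma A.4: norm of the whitened feature-reward vector.  Part (a): under
reward realizability `‖Σ_cov^{-1/2} θ_{φ,r}‖₂ ≤ 1`; part (b): in general
`‖Σ_cov^{-1/2} θ_{φ,r}‖₂ ≤ √d`. -/
theorem stmt_7 {S : Type*} [Fintype S] [DecidableEq S] [Nonempty S]
    (d : ℕ) (hd : 1 ≤ d)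
    (Φ : Matrix S (Fin d) ℝ) (μ : S → ℝ)
    (hμ0 : ∀ i, 0 ≤ μ i) (hμ1 : ∑ i, μ i = 1)
    (Scov : Matrix (Fin d) (Fin d) ℝ)
    (hScov : Scov = Φᵀ * Matrix.diagonal μ * Φ)
    (hcov : Scov.PosDef)
    (r : S → ℝ) (hr : ∀ i, |r i| ≤ 1)
    (θφr : Fin d → ℝ) (hθφr : θφr = (Φᵀ * Matrix.diagonal μ) *ᵥ r) :
    ((∃ θr : Fin d → ℝ, Φ *ᵥ θr = r) →
        ‖(WithLp.equiv 2 (Fin d → ℝ)).symm (hcov.posSemidef.sqrt⁻¹ *ᵥ θφr)‖ ≤ 1) ∧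
      ‖(WithLp.equiv 2 (Fin d → ℝ)).symm (hcov.posSemidef.sqrt⁻¹ *ᵥ θφr)‖ ≤
        Real.sqrt d := by
  classical
  set B := hcov.posSemidef.sqrt with hB
  set w : Fin d → ℝ := B⁻¹ *ᵥ θφr with hw
  -- basic facts about B and Scov
  have hB2 : B * B = Scov := hcov.posSemidef.sqrt_mul_self
  have hSdet : IsUnit Scov.det := (isUnit_iff_ne_zero).2 (ne_of_gt hcov.det_pos)
  have hBdet : IsUnit B.det := by
    have : B.det * B.det = Scov.det := by rw [← det_mul, hB2]
    exact isUnit_iff_ne_zero.2 fun h => (ne_of_gt hcov.det_pos) (by rw [← this, h, zero_mul])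
  have hBsymm : Bᵀ = B := by
    have := hcov.posSemidef.posSemidef_sqrt.1
    simpa [Matrix.IsHermitian, conjTranspose_eq_transpose_of_trivial] using this
  have hSsymm : Scovᵀ = Scov := by
    have := hcov.1
    simpa [Matrix.IsHermitian, conjTranspose_eq_transpose_of_trivial] using this
  have hAA : B⁻¹ * B⁻¹ = Scov⁻¹ := by
    rw [← hB2, Matrix.mul_inv_rev]
  -- the auxiliary vectors
  set x : Fin d → ℝ := Scov⁻¹ *ᵥ θφr with hx
  set a : S → ℝ := Φ *ᵥ x with ha
  -- key identity 1 : w ⬝ᵥ w = x ⬝ᵥ θφr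
  have hkey : w ⬝ᵥ w = x ⬝ᵥ θφr := by
    have hBinvsymm : (B⁻¹)ᵀ = B⁻¹ := by rw [transpose_nonsing_inv, hBsymm]
    have hSinvsymm : (Scov⁻¹)ᵀ = Scov⁻¹ := by rw [transpose_nonsing_inv, hSsymm]
    calc w ⬝ᵥ w = (B⁻¹ *ᵥ θφr) ⬝ᵥ (B⁻¹ *ᵥ θφr) := rfl
      _ = ((B⁻¹ *ᵥ θφr) ᵥ* B⁻¹) ⬝ᵥ θφr := by rw [dotProduct_mulVec]
      _ = ((θφr ᵥ* B⁻¹) ᵥ* B⁻¹) ⬝ᵥ θφr := by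
          rw [show B⁻¹ *ᵥ θφr = θφr ᵥ* B⁻¹ by rw [← vecMul_transpose, hBinvsymm]]
      _ = (θφr ᵥ* (B⁻¹ * B⁻¹)) ⬝ᵥ θφr := by rw [vecMul_vecMul]
      _ = (θφr ᵥ* Scov⁻¹) ⬝ᵥ θφr := by rw [hAA]
      _ = x ⬝ᵥ θφr := by
          rw [hx, show Scov⁻¹ *ᵥ θφr = θφr ᵥ* Scov⁻¹ by rw [← vecMul_transpose, hSinvsymm]]
  -- θφr = Scov *ᵥ x
  have hθx : Scov *ᵥ x = θφr := by
    rw [hx, mulVec_mulVec, Matrix.mul_nonsing_inv _ hSdet, one_mulVec]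
  -- key identity 2 : x ⬝ᵥ θφr = ∑ μ r a
  have hsum1 : x ⬝ᵥ θφr = ∑ i, μ i * r i * a i := by
    rw [hθφr, ← mulVec_mulVec, dotProduct_mulVec, vecMul_transpose, ← ha]
    simp [dotProduct, mulVec_diagonal]
    apply Finset.sum_congr rfl
    intro i _
    ring
  -- key identity 3 : x ⬝ᵥ θφr = ∑ μ a a
  have hsum2 : x ⬝ᵥ θφr = ∑ i, μ i * a i * a i := by
    rw [← hθx, hScov, Matrix.mul_assoc, ← mulVec_mulVec, dotProduct_mulVec, vecMul_transpose,
      ← ha, ← mulVec_mulVec]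
    simp [dotProduct, mulVec_diagonal]
    apply Finset.sum_congr rfl
    intro i _
    ring
  have hK0 : 0 ≤ w ⬝ᵥ w :=
    Finset.sum_nonneg fun i _ => mul_self_nonneg _
  -- Cauchy-Schwarz
  have hKr : w ⬝ᵥ w = ∑ i, μ i * r i * a i := hkey.trans hsum1
  have hKa : w ⬝ᵥ w = ∑ i, μ i * a i * a i := hkey.trans hsum2
  have hCS : (w ⬝ᵥ w) ^ 2 ≤ (∑ i, μ i * r i ^ 2) * (w ⬝ᵥ w) := by
    have h := Finset.sum_mul_sq_le_sq_mul_sq Finset.univ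
      (fun i => Real.sqrt (μ i) * r i) (fun i => Real.sqrt (μ i) * a i)
    have e1 : ∀ i : S, (Real.sqrt (μ i) * r i) * (Real.sqrt (μ i) * a i) = μ i * r i * a i := by
      intro i
      have h2 : Real.sqrt (μ i) * Real.sqrt (μ i) = μ i := Real.mul_self_sqrt (hμ0 i)
      calc Real.sqrt (μ i) * r i * (Real.sqrt (μ i) * a i)
          = (Real.sqrt (μ i) * Real.sqrt (μ i)) * (r i * a i) := by ring
        _ = μ i * r i * a i := by rw [h2]; ring
    have e2 : ∀ i : S, (Real.sqrt (μ i) * r i) ^ 2 = μ i * r i ^ 2 := by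
      intro i
      rw [mul_pow, Real.sq_sqrt (hμ0 i)]
    have e3 : ∀ i : S, (Real.sqrt (μ i) * a i) ^ 2 = μ i * a i * a i := by
      intro i
      rw [mul_pow, Real.sq_sqrt (hμ0 i)]
      ring
    simp only [e1, e2, e3] at h
    calc (w ⬝ᵥ w) ^ 2 = (∑ i, μ i * r i * a i) ^ 2 := by rw [hKr]
      _ ≤ (∑ i, μ i * r i ^ 2) * ∑ i, μ i * a i * a i := h
      _ = (∑ i, μ i * r i ^ 2) * (w ⬝ᵥ w) := by rw [hKa]
  have hμr : (∑ i, μ i * r i ^ 2) ≤ 1 := by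
    rw [← hμ1]
    apply Finset.sum_le_sum
    intro i _
    have h1 : r i ^ 2 ≤ 1 := by
      have := hr i
      nlinarith [abs_nonneg (r i), sq_abs (r i)]
    nlinarith [hμ0 i]
  have hμr0 : 0 ≤ ∑ i, μ i * r i ^ 2 :=
    Finset.sum_nonneg fun i _ => mul_nonneg (hμ0 i) (sq_nonneg _)
  have hK1 : w ⬝ᵥ w ≤ 1 := by nlinarith
  -- conclude about the norm
  have hnorm : ‖(WithLp.equiv 2 (Fin d → ℝ)).symm (hcov.posSemidef.sqrt⁻¹ *ᵥ θφr)‖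
      = Real.sqrt (w ⬝ᵥ w) := by
    rw [EuclideanSpace.norm_eq]
    congr 1
    rw [hw]
    simp [dotProduct, Real.norm_eq_abs, sq_abs, sq]
    rfl
  have hle1 : ‖(WithLp.equiv 2 (Fin d → ℝ)).symm (hcov.posSemidef.sqrt⁻¹ *ᵥ θφr)‖ ≤ 1 := by
    rw [hnorm]
    calc Real.sqrt (w ⬝ᵥ w) ≤ Real.sqrt 1 := Real.sqrt_le_sqrt hK1
      _ = 1 := Real.sqrt_one
  refine ⟨fun _ => hle1, hle1.trans ?_⟩
  calc (1 : ℝ) = Real.sqrt 1 := Real.sqrt_one.symm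
    _ ≤ Real.sqrt d := Real.sqrt_le_sqrt (by exact_mod_cast hd)
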